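/- Let m ≥ 2 and k ≥ 1 be integers, and let d be a positive divisor of m^k − 1. Let τ : ℕ^k → ℕ be a symmetric function (invariant under every permutation of its k arguments) satisfying τ(m·q + b, x₂, …, x_{k−1}, x_k) ≥ τ(b, x₂, …, x_{k−1}, x_k + q) for all q ≥ 1, all 0 ≤ b < m, and all x₂, …, x_k ∈ ℕ. For 0 ≤ h < m^k with base-m expansion h = c₁·m^{k−1} + c₂·m^{k−2} + ⋯ + c_k (each 0 ≤ c_i < m), write τ°(h) = τ(c₁, c₂, …, c_k). If a₁, …, a_k ∈ ℕ are not all zero and a₁·m^{k−1} + a₂·m^{k−2} + ⋯ + a_{k−1}·m + a_k ≡ 0 (mod d), then τ(a₁, …, a_k) ≥ min over 1 ≤ t ≤ (m^k − 1)/d of τ°(t·d). -/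

import Mathlib

set_option maxHeartbeats 2000000

private lemma sum_upd {R : Type*} [CommRing R] {k : ℕ} (f : Fin k → ℕ) (w : Fin k → R)
    (i : Fin k) (v : ℕ) :
    ∑ j, ((Function.update f i v j : ℕ) : R) * w j
      = (∑ j, ((f j : ℕ) : R) * w j) - ((f i : ℕ) : R) * w i + (v : R) * w i := by
  have h : ∀ j : Fin k, ((Function.update f i v j : ℕ) : R) * w j
      = Function.update (fun j => ((f j : ℕ) : R) * w j) i ((v : R) * w i) j := by
    intro j
    rcases eq_or_ne j i with rfl | hne
    · simp
    · simp [Function.update_of_ne hne]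
  rw [Finset.sum_congr rfl fun j _ => h j,
      Finset.sum_update_of_mem (Finset.mem_univ i), ← Finset.erase_eq,
      ← Finset.sum_erase_add Finset.univ _ (Finset.mem_univ i)]
  ring

private lemma digits_lem (m : ℕ) (hm : 2 ≤ m) :
    ∀ (k : ℕ) (a : Fin k → ℕ), (∀ j, a j < m) →
      (∑ j, a j * m ^ (k - 1 - (j : ℕ))) < m ^ k ∧
      ∀ i : Fin k, (∑ j, a j * m ^ (k - 1 - (j : ℕ))) / m ^ (k - 1 - (i : ℕ)) % m = a i := by
  intro k
  induction k with
  | zero =>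
    intro a ha
    refine ⟨by norm_num, fun i => i.elim0⟩
  | succ c ih =>
    intro a ha
    obtain ⟨ih1, ih2⟩ := ih (fun j => a j.succ) (fun j => ha j.succ)
    have hsum : (∑ j : Fin (c+1), a j * m ^ (c + 1 - 1 - (j : ℕ)))
        = (∑ j : Fin c, (a j.succ) * m ^ (c - 1 - (j : ℕ))) + a 0 * m ^ c := by
      rw [Fin.sum_univ_succ, Nat.add_comm]
      congr 1
      refine Finset.sum_congr rfl fun j _ => ?_
      have hv : ((j.succ : Fin (c+1)) : ℕ) = (j : ℕ) + 1 := Fin.val_succ j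
      congr 1
      congr 1
      omega
    have hpow : 0 < m ^ c := pow_pos (by omega) _
    constructor
    · rw [hsum]
      calc (∑ j : Fin c, (a j.succ) * m ^ (c - 1 - (j : ℕ))) + a 0 * m ^ c
          < m ^ c + a 0 * m ^ c := by omega
        _ = (a 0 + 1) * m ^ c := by ring
        _ ≤ m * m ^ c := Nat.mul_le_mul_right _ (ha 0)
        _ = m ^ (c + 1) := (pow_succ' m c).symm
    · intro i
      rw [hsum]
      refine Fin.cases ?_ ?_ i
      · have he : c + 1 - 1 - ((0 : Fin (c+1)) : ℕ) = c := by simp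
        rw [he, Nat.add_mul_div_right _ _ hpow, Nat.div_eq_of_lt ih1]
        simpa using Nat.mod_eq_of_lt (ha 0)
      · intro j
        have hv : ((j.succ : Fin (c+1)) : ℕ) = (j : ℕ) + 1 := Fin.val_succ j
        have he : c + 1 - 1 - ((j.succ : Fin (c+1)) : ℕ) = c - 1 - (j : ℕ) := by omega
        rw [he]
        have hc : a 0 * m ^ c = (a 0 * m ^ ((j:ℕ) + 1)) * m ^ (c - 1 - (j:ℕ)) := by
          rw [mul_assoc, ← pow_add]
          congr 2
          omega
        have hpe : 0 < m ^ (c - 1 - (j:ℕ)) := pow_pos (by omega) _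
        rw [hc, Nat.add_mul_div_right _ _ hpe]
        have hsp : a 0 * m ^ ((j:ℕ) + 1) = (a 0 * m ^ (j:ℕ)) * m := by
          rw [mul_assoc, pow_succ]
        rw [hsp, Nat.add_mul_mod_self_right]
        exact ih2 j

private def nu (m d : ℕ) {k : ℕ} (f : Fin k → ℕ) : ZMod d :=
  ∑ j, ((f j : ℕ) : ZMod d) * (m : ZMod d) ^ (k - 1 - (j : ℕ))

private lemma nu_cast (m d : ℕ) {k : ℕ} (f : Fin k → ℕ) :
    ((∑ j, f j * m ^ (k - 1 - (j : ℕ)) : ℕ) : ZMod d) = nu m d f := by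
  unfold nu
  push_cast
  rfl

private lemma nu_dvd (m d : ℕ) [NeZero d] {k : ℕ} (f : Fin k → ℕ) :
    nu m d f = 0 ↔ d ∣ ∑ j, f j * m ^ (k - 1 - (j : ℕ)) := by
  rw [← nu_cast m d f]
  exact ZMod.natCast_eq_zero_iff _ _

private lemma sum_lt {k : ℕ} (x : Fin k → ℕ) (i0 i1 : Fin k) (q b m : ℕ)
    (hq : 1 ≤ q) (hm : 2 ≤ m) (hqb : m * q + b = x i0) :
    (∑ i, Function.update (Function.update x i0 b) i1
        ((Function.update x i0 b) i1 + q) i) < ∑ i, x i := by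
  have hc : ∀ g : Fin k → ℕ, ((∑ i, g i : ℕ) : ℤ) = ∑ i, ((g i : ℕ) : ℤ) * 1 := by
    intro g; push_cast; simp
  have h1 := sum_upd (R := ℤ) (Function.update x i0 b) (fun _ => 1) i1
      ((Function.update x i0 b) i1 + q)
  have h2 := sum_upd (R := ℤ) x (fun _ => 1) i0 b
  have hE : ((∑ i, Function.update (Function.update x i0 b) i1
      ((Function.update x i0 b) i1 + q) i : ℕ) : ℤ)
      = ((∑ i, x i : ℕ) : ℤ) - (x i0 : ℤ) + (b : ℤ)
        - ((Function.update x i0 b) i1 : ℤ)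
        + (((Function.update x i0 b) i1 : ℤ) + (q : ℤ)) := by
    rw [hc, h1, h2, ← hc]
    push_cast
    ring
  have hxi0 : (x i0 : ℤ) = (m : ℤ) * q + b := by exact_mod_cast hqb.symm
  have hmq : (q : ℤ) < (m : ℤ) * q := by
    have h1q : (1 : ℤ) ≤ q := by exact_mod_cast hq
    nlinarith [show (2:ℤ) ≤ m from by exact_mod_cast hm]
  have : ((∑ i, Function.update (Function.update x i0 b) i1
      ((Function.update x i0 b) i1 + q) i : ℕ) : ℤ) < ((∑ i, x i : ℕ) : ℤ) := by
    rw [hE]; linarith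
  exact_mod_cast this

/-- **Theorem 1 of the paper.** Let `m ≥ 2`, `k ≥ 1`, and let `d` be a positive divisor of
`m^k - 1`. Let `τ : ℕ^k → ℕ` be symmetric and satisfy
`τ(m·q + b, x₂, …, x_k) ≥ τ(b, x₂, …, x_k + q)` for all `q ≥ 1`, `0 ≤ b < m`.
For `0 ≤ t·d < m^k` with base-`m` digits `c₁, …, c_k` (so `cⱼ = (t·d) / m^{k-j} % m`),
write `τ°(t·d) = τ(c₁, …, c_k)`.  If `a₁, …, a_k ∈ ℕ` are not all zero and
`a₁·m^{k-1} + ⋯ + a_k ≡ 0 (mod d)`, then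
`τ(a₁, …, a_k) ≥ min_{1 ≤ t ≤ (m^k-1)/d} τ°(t·d)`, i.e. some `t` in that range has
`τ°(t·d) ≤ τ(a₁, …, a_k)`. -/
theorem tau_ge_min (m k d : ℕ) (hm : 2 ≤ m) (hk : 1 ≤ k)
    (hd : 0 < d) (hdvd : d ∣ m ^ k - 1)
    (τ : (Fin k → ℕ) → ℕ)
    (hsym : ∀ (x : Fin k → ℕ) (σ : Equiv.Perm (Fin k)), τ (x ∘ σ) = τ x)
    (hτ : ∀ (x : Fin k → ℕ) (q b : ℕ), 1 ≤ q → b < m →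
      τ (Function.update (Function.update x ⟨0, by omega⟩ b) ⟨k - 1, by omega⟩
          ((Function.update x ⟨0, by omega⟩ b) ⟨k - 1, by omega⟩ + q))
        ≤ τ (Function.update x ⟨0, by omega⟩ (m * q + b)))
    (a : Fin k → ℕ) (ha : ∃ j, a j ≠ 0)
    (hcong : d ∣ ∑ j : Fin k, a j * m ^ (k - 1 - (j : ℕ))) :
    ∃ t, 1 ≤ t ∧ t ≤ (m ^ k - 1) / d ∧
      τ (fun j => t * d / m ^ (k - 1 - (j : ℕ)) % m) ≤ τ a := by
  obtain ⟨n, rfl⟩ : ∃ n, k = n + 1 := ⟨k - 1, by omega⟩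
  haveI : NeZero d := ⟨by omega⟩
  have hmk : (m : ZMod d) ^ (n + 1) = 1 := by
    have h2 : 1 ≤ m ^ (n + 1) := Nat.one_le_pow _ _ (by omega)
    have h1 : ((m ^ (n+1) - 1 : ℕ) : ZMod d) = 0 :=
      (ZMod.natCast_eq_zero_iff _ _).mpr hdvd
    calc (m : ZMod d) ^ (n+1) = ((m ^ (n+1) : ℕ) : ZMod d) := by push_cast; ring
      _ = ((m ^ (n+1) - 1 + 1 : ℕ) : ZMod d) := by rw [Nat.sub_add_cancel h2]
      _ = 1 := by rw [Nat.cast_add, h1, Nat.cast_one, zero_add]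
  have hmn : (m : ZMod d) * (m : ZMod d) ^ n = 1 := by
    rw [← pow_succ']; exact hmk
  -- the basic operation
  have hop : ∀ x : Fin (n+1) → ℕ, m ≤ x ⟨0, by omega⟩ →
      ∃ y : Fin (n+1) → ℕ, τ y ≤ τ x ∧ nu m d y = nu m d x ∧
        (∑ i, y i) < ∑ i, x i ∧ (∃ i, y i ≠ 0) := by
    intro x hx
    obtain ⟨q, b, hq, hb, hqb⟩ :
        ∃ q b, 1 ≤ q ∧ b < m ∧ m * q + b = x ⟨0, by omega⟩ :=
      ⟨x ⟨0, by omega⟩ / m, x ⟨0, by omega⟩ % m,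
        (Nat.one_le_div_iff (by omega)).mpr hx, Nat.mod_lt _ (by omega),
        Nat.div_add_mod _ _⟩
    refine ⟨Function.update (Function.update x ⟨0, by omega⟩ b) ⟨n + 1 - 1, by omega⟩
        ((Function.update x ⟨0, by omega⟩ b) ⟨n + 1 - 1, by omega⟩ + q), ?_, ?_, ?_, ?_⟩
    · have h := hτ x q b hq hb
      rwa [hqb, Function.update_eq_self] at h
    · unfold nu
      rw [sum_upd, sum_upd]
      have hca : ((x ⟨0, by omega⟩ : ℕ) : ZMod d) = (m : ZMod d) * q + b := by
        rw [← hqb]; push_cast; ring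
      have he0 : n + 1 - 1 - ((⟨0, by omega⟩ : Fin (n+1)) : ℕ) = n := by simp
      have he1 : n + 1 - 1 - ((⟨n + 1 - 1, by omega⟩ : Fin (n+1)) : ℕ) = 0 := by simp
      rw [he0, he1, hca]
      push_cast
      ring_nf
      linear_combination (-(q : ZMod d)) * hmn
    · exact sum_lt x _ _ q b m hq hm hqb
    · refine ⟨⟨n + 1 - 1, by omega⟩, ?_⟩
      rw [Function.update_self]
      omega
  -- rotation
  have hrot : ∀ x : Fin (n+1) → ℕ, nu m d (x ∘ finRotate (n+1)) = m * nu m d x := by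
    intro x
    unfold nu
    have key : ∑ j, (((x ∘ finRotate (n+1)) j : ℕ) : ZMod d) * (m : ZMod d) ^ (n + 1 - 1 - (j:ℕ))
        = ∑ i, (m : ZMod d) * (((x i : ℕ) : ZMod d) * (m : ZMod d) ^ (n + 1 - 1 - (i:ℕ))) := by
      apply Fintype.sum_equiv (finRotate (n+1))
      intro j
      have hval : (x ∘ finRotate (n+1)) j = x (finRotate (n+1) j) := rfl
      rw [hval]
      rcases eq_or_ne j (Fin.last n) with rfl | hne
      · have h1 : finRotate (n+1) (Fin.last n) = 0 := by
          rw [finRotate_succ_apply]; simp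
        rw [h1]
        have e1 : n + 1 - 1 - ((Fin.last n : Fin (n+1)) : ℕ) = 0 := by simp
        have e2 : n + 1 - 1 - ((0 : Fin (n+1)) : ℕ) = n := by simp
        rw [e1, e2, pow_zero, mul_one]
        linear_combination (-((x 0 : ℕ) : ZMod d)) * hmn
      · have hlt : (j : ℕ) < n := Fin.val_lt_last hne
        have h1 : finRotate (n+1) j = j + 1 := finRotate_succ_apply j
        have h2 : ((j + 1 : Fin (n+1)) : ℕ) = (j : ℕ) + 1 := by
          apply Fin.val_add_one_of_lt
          exact Fin.lt_last_iff_ne_last.mpr hne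
        rw [h1]
        have hwj : (m : ZMod d) ^ (n + 1 - 1 - (j:ℕ))
            = (m : ZMod d) * (m : ZMod d) ^ (n + 1 - 1 - ((j + 1 : Fin (n+1)) : ℕ)) := by
          rw [h2, ← pow_succ']
          congr 1
          omega
        rw [hwj]
        ring
    rw [key, ← Finset.mul_sum]
  -- step: eliminate a big entry
  have step : ∀ v : ℕ, ∀ x : Fin (n+1) → ℕ, ∀ j : Fin (n+1), (j : ℕ) ≤ v → m ≤ x j →
      nu m d x = 0 → ∃ y : Fin (n+1) → ℕ,
        τ y ≤ τ x ∧ nu m d y = 0 ∧ (∑ i, y i) < ∑ i, x i ∧ (∃ i, y i ≠ 0) := by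
    intro v
    induction v with
    | zero =>
      intro x j hj hxj hνx
      have hj0 : j = ⟨0, by omega⟩ := Fin.ext (show (j : ℕ) = 0 by omega)
      rw [hj0] at hxj
      obtain ⟨y, h1, h2, h3, h4⟩ := hop x hxj
      exact ⟨y, h1, h2.trans hνx, h3, h4⟩
    | succ v ih =>
      intro x j hj hxj hνx
      by_cases hle : (j : ℕ) ≤ v
      · exact ih x j hle hxj hνx
      · have hjv : (j : ℕ) = v + 1 := by omega
        have hvlt : v < n + 1 := by have := j.isLt; omega
        have hidx : finRotate (n+1) ⟨v, hvlt⟩ = j := by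
          rw [finRotate_succ_apply]
          apply Fin.ext
          rw [Fin.val_add_one_of_lt]
          · simp [hjv]
          · apply Fin.lt_last_iff_ne_last.mpr
            intro hcon
            have hvv := congrArg Fin.val hcon
            simp [Fin.val_last] at hvv
            have := j.isLt
            omega
        have hx2 : m ≤ (x ∘ finRotate (n+1)) ⟨v, hvlt⟩ := by
          show m ≤ x (finRotate (n+1) ⟨v, hvlt⟩)
          rw [hidx]; exact hxj
        have hν2 : nu m d (x ∘ finRotate (n+1)) = 0 := by
          rw [hrot, hνx, mul_zero]
        obtain ⟨y, h1, h2, h3, h4⟩ := ih (x ∘ finRotate (n+1)) ⟨v, hvlt⟩ le_rfl hx2 hν2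
        refine ⟨y, ?_, h2, ?_, h4⟩
        · exact h1.trans (le_of_eq (hsym x (finRotate (n+1))))
        · calc (∑ i, y i) < ∑ i, (x ∘ finRotate (n+1)) i := h3
            _ = ∑ i, x i := Equiv.sum_comp (finRotate (n+1)) x
  -- main induction on the sum of entries
  have main : ∀ S : ℕ, ∀ x : Fin (n+1) → ℕ, (∑ i, x i) ≤ S → (∃ i, x i ≠ 0) →
      nu m d x = 0 →
      ∃ t, 1 ≤ t ∧ t ≤ (m ^ (n+1) - 1) / d ∧
        τ (fun j => t * d / m ^ (n + 1 - 1 - (j : ℕ)) % m) ≤ τ x := by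
    intro S
    induction S using Nat.strong_induction_on with
    | _ S ihS =>
      intro x hS hnz hνx
      by_cases hbig : ∃ j, m ≤ x j
      · obtain ⟨j, hj⟩ := hbig
        obtain ⟨y, h1, h2, h3, h4⟩ := step (j : ℕ) x j le_rfl hj hνx
        obtain ⟨t, ht1, ht2, ht3⟩ := ihS (∑ i, y i) (by omega) y le_rfl h4 h2
        exact ⟨t, ht1, ht2, ht3.trans h1⟩
      · push_neg at hbig
        obtain ⟨hNlt, hdig⟩ := digits_lem m hm (n+1) x hbig
        have hdN : d ∣ ∑ j, x j * m ^ (n + 1 - 1 - (j : ℕ)) := (nu_dvd m d x).mp hνx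
        have hNpos : 0 < ∑ j, x j * m ^ (n + 1 - 1 - (j : ℕ)) := by
          obtain ⟨i, hi⟩ := hnz
          have hpe : 0 < m ^ (n + 1 - 1 - (i : ℕ)) := pow_pos (by omega) _
          have hterm : 0 < x i * m ^ (n + 1 - 1 - (i : ℕ)) := by positivity
          calc 0 < x i * m ^ (n + 1 - 1 - (i : ℕ)) := hterm
            _ ≤ _ := Finset.single_le_sum (f := fun j => x j * m ^ (n + 1 - 1 - (j : ℕ)))
                (fun _ _ => Nat.zero_le _) (Finset.mem_univ i)
        refine ⟨(∑ j, x j * m ^ (n + 1 - 1 - (j : ℕ))) / d, ?_, ?_, ?_⟩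
        · exact (Nat.one_le_div_iff hd).mpr (Nat.le_of_dvd hNpos hdN)
        · exact Nat.div_le_div_right (Nat.le_sub_one_of_lt hNlt)
        · have hmul : (∑ j, x j * m ^ (n + 1 - 1 - (j : ℕ))) / d * d
              = ∑ j, x j * m ^ (n + 1 - 1 - (j : ℕ)) := Nat.div_mul_cancel hdN
          have hfun : (fun j : Fin (n+1) =>
              (∑ j, x j * m ^ (n + 1 - 1 - (j : ℕ))) / d * d / m ^ (n + 1 - 1 - (j : ℕ)) % m)
              = x := by
            funext j
            rw [hmul]
            exact hdig j
          rw [hfun]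
  exact main (∑ i, a i) a le_rfl ha ((nu_dvd m d a).mpr hcong)
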